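/- Let f : ℝⁿ → ℝ be Lipschitz and let x ∈ ℝⁿ be a point such that: (i) all partial derivatives ∂f/∂xᵢ(x) exist for 1 ≤ i ≤ n; (ii) directional derivatives act linearly at x (whenever f'(x,u) and f'(x,v) exist, f'(x,u+v) exists and equals their sum, and f'(x,su) = s f'(x,u)); and (iii) x is a regular point of f, i.e. for every v such that f'(x,v) exists, (f(x+tu+tv) − f(x+tu))/t → f'(x,v) as t → 0 uniformly over u in the closed unit ball. Then f is (Fréchet) differentiable at x with derivative h ↦ ⟨h, ∇f(x)⟩. -/

import Mathlib

open Filter Topology Metric Set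

/-- Two-sided directional derivative of `f` at `x` in direction `v`. -/
def HasDirDeriv {n : ℕ} (f : EuclideanSpace ℝ (Fin n) → ℝ)
    (x v : EuclideanSpace ℝ (Fin n)) (L : ℝ) : Prop :=
  Tendsto (fun t : ℝ => (f (x + t • v) - f x) / t) (𝓝[≠] (0 : ℝ)) (𝓝 L)

/-- `(f(x+tu+tv) − f(x+tu))/t → L` as `t → 0`, uniformly over `u` in the closed
unit ball. -/
def UniformDirConv {n : ℕ} (f : EuclideanSpace ℝ (Fin n) → ℝ)
    (x v : EuclideanSpace ℝ (Fin n)) (L : ℝ) : Prop :=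
  ∀ ε : ℝ, 0 < ε → ∃ δ : ℝ, 0 < δ ∧ ∀ t : ℝ, t ≠ 0 → |t| < δ →
    ∀ u : EuclideanSpace ℝ (Fin n), ‖u‖ ≤ 1 →
      |(f (x + t • u + t • v) - f (x + t • u)) / t - L| ≤ ε

set_option maxHeartbeats 1000000 in
theorem stmt_12 {n : ℕ} (f : EuclideanSpace ℝ (Fin n) → ℝ) (K : NNReal)
    (hf : LipschitzWith K f) (x : EuclideanSpace ℝ (Fin n))
    (g : Fin n → ℝ)
    (hpartial : ∀ i : Fin n, HasDirDeriv f x (EuclideanSpace.single i (1 : ℝ)) (g i))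
    (hadd : ∀ (u v : EuclideanSpace ℝ (Fin n)) (Lu Lv : ℝ),
      HasDirDeriv f x u Lu → HasDirDeriv f x v Lv → HasDirDeriv f x (u + v) (Lu + Lv))
    (hsmul : ∀ (u : EuclideanSpace ℝ (Fin n)) (L : ℝ) (s : ℝ),
      HasDirDeriv f x u L → HasDirDeriv f x (s • u) (s * L))
    (hreg : ∀ (v : EuclideanSpace ℝ (Fin n)) (L : ℝ),
      HasDirDeriv f x v L → UniformDirConv f x v L) :
    HasFDerivAt f (∑ i : Fin n, g i • (EuclideanSpace.proj i : EuclideanSpace ℝ (Fin n) →L[ℝ] ℝ)) x := by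
  set L : EuclideanSpace ℝ (Fin n) →L[ℝ] ℝ := ∑ i : Fin n, g i • (EuclideanSpace.proj i : EuclideanSpace ℝ (Fin n) →L[ℝ] ℝ) with hL
  -- zero direction
  have h0 : HasDirDeriv f x 0 0 := by
    have : (fun t : ℝ => (f (x + t • (0 : EuclideanSpace ℝ (Fin n))) - f x) / t) = fun _ => (0 : ℝ) := by
      funext t; simp
    unfold HasDirDeriv
    rw [this]
    exact tendsto_const_nhds
  -- directional derivative in every direction equals L
  have hdir : ∀ v : EuclideanSpace ℝ (Fin n), HasDirDeriv f x v (L v) := by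
    intro v
    have key : ∀ s : Finset (Fin n),
        HasDirDeriv f x (∑ i ∈ s, v i • EuclideanSpace.single i (1 : ℝ))
          (∑ i ∈ s, v i * g i) := by
      intro s
      refine Finset.induction_on s ?_ ?_
      · simpa using h0
      · intro a s ha ih
        rw [Finset.sum_insert ha, Finset.sum_insert ha]
        exact hadd _ _ _ _ (hsmul _ _ _ (hpartial _)) ih
    have hv : (∑ i : Fin n, v i • EuclideanSpace.single i (1 : ℝ)) = v := by
      simpa [EuclideanSpace.basisFun_apply, EuclideanSpace.basisFun_repr] using
        (EuclideanSpace.basisFun (Fin n) ℝ).sum_repr v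
    have hLv : L v = ∑ i : Fin n, v i * g i := by
      simp [hL, ContinuousLinearMap.sum_apply, PiLp.proj_apply, mul_comm]
    rw [hLv]
    have := key Finset.univ
    rwa [hv] at this
  -- main argument
  rw [hasFDerivAt_iff_tendsto, Metric.tendsto_nhds_nhds]
  intro ε hε
  set C : ℝ := (K : ℝ) + ‖L‖ + 1 with hC
  have hCpos : 0 < C := by positivity
  set ε' : ℝ := ε / (4 * C) with hε'def
  have hε' : 0 < ε' := by positivity
  -- finite ε'-net of closed unit ball
  obtain ⟨T, hTfin, hTcover⟩ :=
    Metric.totallyBounded_iff.mp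
      ((isCompact_closedBall (0 : EuclideanSpace ℝ (Fin n)) 1).totallyBounded) ε' hε'
  -- uniform smallness over the net, for small t
  have hev : ∀ᶠ t in 𝓝[≠] (0 : ℝ), ∀ y ∈ T,
      |(f (x + t • y) - f x) / t - L y| < ε / 4 := by
    rw [eventually_all_finite hTfin]
    intro y _
    have := Metric.tendsto_nhds.mp (hdir y) (ε / 4) (by positivity)
    filter_upwards [this] with t ht
    rwa [Real.dist_eq] at ht
  rw [Filter.Eventually, Metric.mem_nhdsWithin_iff] at hev
  obtain ⟨δ, hδ, hδP⟩ := hev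
  refine ⟨δ, hδ, ?_⟩
  intro x' hx'
  by_cases hxx : x' = x
  · subst hxx; simp [hε]
  · set t : ℝ := ‖x' - x‖ with htdef
    have ht0 : 0 < t := by
      rw [htdef]
      exact norm_pos_iff.mpr (sub_ne_zero.mpr hxx)
    set u : EuclideanSpace ℝ (Fin n) := t⁻¹ • (x' - x) with hudef
    have hu1 : ‖u‖ = 1 := by
      rw [hudef, norm_smul, norm_inv, Real.norm_eq_abs, abs_of_pos ht0]
      field_simp
      exact htdef.symm
    have hxu : x' = x + t • u := by
      rw [hudef, smul_smul, mul_inv_cancel₀ (ne_of_gt ht0), one_smul]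
      abel
    -- find a net point near u
    have humem : u ∈ closedBall (0 : EuclideanSpace ℝ (Fin n)) 1 := by
      simp [hu1]
    obtain ⟨y, hyT, hyu⟩ : ∃ y ∈ T, u ∈ ball y ε' := by
      have := hTcover humem
      simpa using this
    have hyu' : ‖u - y‖ < ε' := by
      rw [← dist_eq_norm]
      exact mem_ball.mp hyu
    -- t is small and nonzero, so the net estimate applies
    have htδ : ∀ z ∈ T, |(f (x + t • z) - f x) / t - L z| < ε / 4 := by
      intro z hz
      refine hδP ⟨?_, ?_⟩ z hz
      · rw [mem_ball, Real.dist_eq, sub_zero, abs_of_pos ht0]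
        calc t = dist x' x := by rw [htdef, dist_eq_norm]
        _ < δ := hx'
      · exact ne_of_gt ht0
    -- the quantity to estimate
    rw [Real.dist_eq, sub_zero]
    have hkey : ‖x' - x‖⁻¹ * ‖f x' - f x - L (x' - x)‖
        = |(f (x + t • u) - f x) / t - L u| := by
      rw [hxu]
      have hLt : L (t • u) = t * L u := by rw [map_smul, smul_eq_mul]
      have h1 : (f (x + t • u) - f x) / t - L u
          = (f (x + t • u) - f x - t * L u) / t := by
        field_simp
      rw [h1, abs_div, abs_of_pos ht0]
      have : x + t • u - x = t • u := by abel
      rw [this, hLt]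
      rw [Real.norm_eq_abs]
      rw [div_eq_inv_mul]
      congr 1
      rw [norm_smul, Real.norm_eq_abs, abs_of_pos ht0, hu1, mul_one]
    rw [abs_of_nonneg (by positivity : (0:ℝ) ≤ ‖x' - x‖⁻¹ * ‖f x' - f x - L (x' - x)‖), hkey]
    -- decompose into three pieces
    have hdecomp : (f (x + t • u) - f x) / t - L u
        = ((f (x + t • u) - f (x + t • y)) / t)
          + ((f (x + t • y) - f x) / t - L y)
          + (L y - L u) := by ring
    have h1 : |(f (x + t • u) - f (x + t • y)) / t| ≤ (K : ℝ) * ε' := by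
      rw [abs_div, abs_of_pos ht0, div_le_iff₀ ht0]
      have hlip : |f (x + t • u) - f (x + t • y)| ≤ (K : ℝ) * ‖t • u - t • y‖ := by
        have := hf.dist_le_mul (x + t • u) (x + t • y)
        rw [Real.dist_eq, dist_eq_norm] at this
        calc |f (x + t • u) - f (x + t • y)| ≤ (K:ℝ) * ‖x + t • u - (x + t • y)‖ := this
        _ = (K : ℝ) * ‖t • u - t • y‖ := by congr 1; congr 1; abel
      calc |f (x + t • u) - f (x + t • y)| ≤ (K : ℝ) * ‖t • u - t • y‖ := hlip
      _ = (K : ℝ) * (t * ‖u - y‖) := by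
          rw [← smul_sub, norm_smul, Real.norm_eq_abs, abs_of_pos ht0]
      _ ≤ (K : ℝ) * (t * ε') := by
          have := mul_le_mul_of_nonneg_left (le_of_lt hyu') (le_of_lt ht0)
          exact mul_le_mul_of_nonneg_left this (NNReal.coe_nonneg K)
      _ = (K : ℝ) * ε' * t := by ring
    have h2 : |(f (x + t • y) - f x) / t - L y| < ε / 4 := htδ y hyT
    have h3 : |L y - L u| ≤ ‖L‖ * ε' := by
      have : L y - L u = L (y - u) := by rw [map_sub]
      rw [this]
      calc |L (y - u)| ≤ ‖L‖ * ‖y - u‖ := L.le_opNorm (y - u)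
      _ ≤ ‖L‖ * ε' := by
          apply mul_le_mul_of_nonneg_left _ (norm_nonneg L)
          rw [norm_sub_rev]; exact le_of_lt hyu'
    have hCe : (K : ℝ) * ε' + ‖L‖ * ε' ≤ ε / 4 := by
      have : (K : ℝ) * ε' + ‖L‖ * ε' ≤ C * ε' := by
        rw [hC]; nlinarith [norm_nonneg L, NNReal.coe_nonneg K, le_of_lt hε']
      calc (K : ℝ) * ε' + ‖L‖ * ε' ≤ C * ε' := this
      _ = ε / 4 := by rw [hε'def]; field_simp
    calc |(f (x + t • u) - f x) / t - L u|
        ≤ |(f (x + t • u) - f (x + t • y)) / t|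
          + |(f (x + t • y) - f x) / t - L y| + |L y - L u| := by
          rw [hdecomp]; exact (abs_add_le _ _).trans (by gcongr; exact abs_add_le _ _)
      _ ≤ (K : ℝ) * ε' + ε / 4 + ‖L‖ * ε' := by
          gcongr
      _ < ε := by nlinarith [hCe, hε]
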